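/- Let R be an integral domain such that every nonzero ideal of R is unit-cancellative and every nonzero ideal of R is divisible by only finitely many ideals of R. Then every nonzero proper ideal of R is a finite product of molecules. -/

import Mathlib

/-- If every nonzero ideal of a domain is unit-cancellative and divisible by
only finitely many ideals, then every nonzero proper ideal is a finite product
of molecules. -/
theorem stmt_15 {R : Type*} [CommRing R] [IsDomain R]
    (hcanc : ∀ I : Ideal R, I ≠ ⊥ → ∀ J : Ideal R, I = I * J → J = ⊤)
    (hfin : ∀ I : Ideal R, I ≠ ⊥ →
      {J : Ideal R | ∃ K : Ideal R, I = J * K}.Finite) :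
    ∀ I : Ideal R, I ≠ ⊥ → I ≠ ⊤ →
      ∃ s : Multiset (Ideal R),
        (∀ J ∈ s, J ≠ ⊥ ∧ J ≠ ⊤ ∧
          ∀ A B : Ideal R, J = A * B → A = ⊤ ∨ B = ⊤) ∧ I = s.prod := by
  intro I hI0 hIT
  by_contra hP
  set P : Ideal R → Prop := fun J => ∃ s : Multiset (Ideal R),
    (∀ J' ∈ s, J' ≠ ⊥ ∧ J' ≠ ⊤ ∧
      ∀ A B : Ideal R, J' = A * B → A = ⊤ ∨ B = ⊤) ∧ J = s.prod with hPdef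
  set T : Set (Ideal R) := {J | (∃ K, I = J * K) ∧ J ≠ ⊤ ∧ ¬ P J} with hTdef
  have hTfin : T.Finite := (hfin I hI0).subset fun J hJ => hJ.1
  have hITmem : I ∈ T := ⟨⟨⊤, (Ideal.mul_top I).symm⟩, hIT, hP⟩
  obtain ⟨M, hM, hMmax'⟩ := hTfin.exists_maximalFor id T ⟨I, hITmem⟩
  have hMmax : ∀ a' ∈ T, id M ≤ id a' → id M = id a' :=
    fun a' ha h => le_antisymm h (hMmax' ha h)
  obtain ⟨⟨K, hK⟩, hMT, hMP⟩ := hM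
  have hM0 : M ≠ ⊥ := by rintro rfl; exact hI0 (by simpa using hK)
  have hmol : ¬ (∀ A B : Ideal R, M = A * B → A = ⊤ ∨ B = ⊤) := by
    intro h
    exact hMP ⟨{M}, by simpa using ⟨hM0, hMT, h⟩, by simp⟩
  push_neg at hmol
  obtain ⟨A, B, hAB, hAT, hBT⟩ := hmol
  have hA0 : A ≠ ⊥ := by rintro rfl; exact hM0 (by simpa using hAB)
  have hB0 : B ≠ ⊥ := by rintro rfl; exact hM0 (by simpa using hAB)
  have hMA : M ≠ A := fun h => hBT (hcanc A hA0 B (h ▸ hAB))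
  have hMB : M ≠ B := fun h =>
    hAT (hcanc B hB0 A (by rw [mul_comm]; exact h ▸ hAB))
  have hPA : P A := by
    by_contra hpa
    have hmem : A ∈ T := ⟨⟨B * K, by rw [hK, hAB, mul_assoc]⟩, hAT, hpa⟩
    exact hMA (hMmax A hmem (hAB ▸ Ideal.mul_le_left))
  have hPB : P B := by
    by_contra hpb
    have hmem : B ∈ T :=
      ⟨⟨A * K, by rw [hK, hAB, mul_comm A B, mul_assoc]⟩, hBT, hpb⟩
    exact hMB (hMmax B hmem (hAB ▸ Ideal.mul_le_right))
  obtain ⟨sA, hsA, hsA2⟩ := hPA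
  obtain ⟨sB, hsB, hsB2⟩ := hPB
  refine hMP ⟨sA + sB, ?_, ?_⟩
  · intro J hJ
    rcases Multiset.mem_add.mp hJ with h | h
    · exact hsA J h
    · exact hsB J h
  · rw [Multiset.prod_add, ← hsA2, ← hsB2, hAB]
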